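/- Suppose antihermitian matrix-valued functions T1(s), T2(s), T3(s) satisfy Nahm's equations dTi/ds = (1/2)∑ ε_{ijl}[Tj, Tl], and suppose each s·Ti(s) extends continuously to s = 0 with limits -Xi := -lim_{s→0} s Ti(s). Then the matrices Xi satisfy the su(2) commutation relations [Xi, Xj] = ∑_l ε_{ijl} Xl. -/

import Mathlib

open Matrix Filter Set

/-- Levi-Civita symbol on three indices, with `eps 0 1 2 = 1`. -/
def eps (i j l : Fin 3) : ℤ :=
  if (i, j, l) ∈ [((0 : Fin 3), (1 : Fin 3), (2 : Fin 3)), (1, 2, 0), (2, 0, 1)] then 1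
  else if (i, j, l) ∈ [((0 : Fin 3), (2 : Fin 3), (1 : Fin 3)), (2, 1, 0), (1, 0, 2)] then -1
  else 0

@[simp] lemma epsC_000 : ((eps 0 0 0 : ℤ) : ℂ) = 0 := by norm_num [show eps 0 0 0 = 0 by decide]
@[simp] lemma epsC_001 : ((eps 0 0 1 : ℤ) : ℂ) = 0 := by norm_num [show eps 0 0 1 = 0 by decide]
@[simp] lemma epsC_002 : ((eps 0 0 2 : ℤ) : ℂ) = 0 := by norm_num [show eps 0 0 2 = 0 by decide]
@[simp] lemma epsC_010 : ((eps 0 1 0 : ℤ) : ℂ) = 0 := by norm_num [show eps 0 1 0 = 0 by decide]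
@[simp] lemma epsC_011 : ((eps 0 1 1 : ℤ) : ℂ) = 0 := by norm_num [show eps 0 1 1 = 0 by decide]
@[simp] lemma epsC_012 : ((eps 0 1 2 : ℤ) : ℂ) = 1 := by norm_num [show eps 0 1 2 = 1 by decide]
@[simp] lemma epsC_020 : ((eps 0 2 0 : ℤ) : ℂ) = 0 := by norm_num [show eps 0 2 0 = 0 by decide]
@[simp] lemma epsC_021 : ((eps 0 2 1 : ℤ) : ℂ) = -1 := by norm_num [show eps 0 2 1 = -1 by decide]
@[simp] lemma epsC_022 : ((eps 0 2 2 : ℤ) : ℂ) = 0 := by norm_num [show eps 0 2 2 = 0 by decide]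
@[simp] lemma epsC_100 : ((eps 1 0 0 : ℤ) : ℂ) = 0 := by norm_num [show eps 1 0 0 = 0 by decide]
@[simp] lemma epsC_101 : ((eps 1 0 1 : ℤ) : ℂ) = 0 := by norm_num [show eps 1 0 1 = 0 by decide]
@[simp] lemma epsC_102 : ((eps 1 0 2 : ℤ) : ℂ) = -1 := by norm_num [show eps 1 0 2 = -1 by decide]
@[simp] lemma epsC_110 : ((eps 1 1 0 : ℤ) : ℂ) = 0 := by norm_num [show eps 1 1 0 = 0 by decide]
@[simp] lemma epsC_111 : ((eps 1 1 1 : ℤ) : ℂ) = 0 := by norm_num [show eps 1 1 1 = 0 by decide]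
@[simp] lemma epsC_112 : ((eps 1 1 2 : ℤ) : ℂ) = 0 := by norm_num [show eps 1 1 2 = 0 by decide]
@[simp] lemma epsC_120 : ((eps 1 2 0 : ℤ) : ℂ) = 1 := by norm_num [show eps 1 2 0 = 1 by decide]
@[simp] lemma epsC_121 : ((eps 1 2 1 : ℤ) : ℂ) = 0 := by norm_num [show eps 1 2 1 = 0 by decide]
@[simp] lemma epsC_122 : ((eps 1 2 2 : ℤ) : ℂ) = 0 := by norm_num [show eps 1 2 2 = 0 by decide]
@[simp] lemma epsC_200 : ((eps 2 0 0 : ℤ) : ℂ) = 0 := by norm_num [show eps 2 0 0 = 0 by decide]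
@[simp] lemma epsC_201 : ((eps 2 0 1 : ℤ) : ℂ) = 1 := by norm_num [show eps 2 0 1 = 1 by decide]
@[simp] lemma epsC_202 : ((eps 2 0 2 : ℤ) : ℂ) = 0 := by norm_num [show eps 2 0 2 = 0 by decide]
@[simp] lemma epsC_210 : ((eps 2 1 0 : ℤ) : ℂ) = -1 := by norm_num [show eps 2 1 0 = -1 by decide]
@[simp] lemma epsC_211 : ((eps 2 1 1 : ℤ) : ℂ) = 0 := by norm_num [show eps 2 1 1 = 0 by decide]
@[simp] lemma epsC_212 : ((eps 2 1 2 : ℤ) : ℂ) = 0 := by norm_num [show eps 2 1 2 = 0 by decide]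
@[simp] lemma epsC_220 : ((eps 2 2 0 : ℤ) : ℂ) = 0 := by norm_num [show eps 2 2 0 = 0 by decide]
@[simp] lemma epsC_221 : ((eps 2 2 1 : ℤ) : ℂ) = 0 := by norm_num [show eps 2 2 1 = 0 by decide]
@[simp] lemma epsC_222 : ((eps 2 2 2 : ℤ) : ℂ) = 0 := by norm_num [show eps 2 2 2 = 0 by decide]

/-- If antihermitian Nahm matrices have a simple pole at `s = 0` with residues `-Xᵢ`, then
the `Xᵢ` satisfy the `su(2)` commutation relations `[Xᵢ, Xⱼ] = ∑ₗ ε_{ijl} Xₗ`. -/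
theorem residues_form_su2_rep {k : ℕ} (δ : ℝ) (hδ : 0 < δ)
    (T : Fin 3 → ℝ → Matrix (Fin k) (Fin k) ℂ)
    (X : Fin 3 → Matrix (Fin k) (Fin k) ℂ)
    (hdiff : ∀ (i : Fin 3) (r c : Fin k),
      DifferentiableOn ℝ (fun s => T i s r c) (Ioo 0 δ))
    (hskew : ∀ (i : Fin 3), ∀ s ∈ Ioo (0 : ℝ) δ, (T i s)ᴴ = -(T i s))
    (hnahm : ∀ (i : Fin 3), ∀ s ∈ Ioo (0 : ℝ) δ, ∀ r c : Fin k,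
      deriv (fun t => T i t r c) s =
        ((2⁻¹ : ℂ) • ∑ j : Fin 3, ∑ l : Fin 3,
          (eps i j l : ℂ) • ⁅T j s, T l s⁆) r c)
    (hlim : ∀ (i : Fin 3) (r c : Fin k),
      Tendsto (fun s : ℝ => (s : ℂ) * T i s r c)
        (nhdsWithin 0 (Ioo 0 δ)) (nhds (-(X i r c))))
    (hlim' : ∀ (i : Fin 3) (r c : Fin k),
      Tendsto (fun s : ℝ => (s : ℂ) ^ 2 * deriv (fun t => T i t r c) s)
        (nhdsWithin 0 (Ioo 0 δ)) (nhds (X i r c))) :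
    ∀ i j : Fin 3, ⁅X i, X j⁆ = ∑ l : Fin 3, (eps i j l : ℂ) • X l := by
  have hne : (nhdsWithin (0:ℝ) (Ioo 0 δ)).NeBot := by
    rw [← mem_closure_iff_nhdsWithin_neBot, closure_Ioo hδ.ne]
    exact ⟨le_refl 0, hδ.le⟩
  have key : ∀ i, X i = (2⁻¹:ℂ) • ∑ j, ∑ l, ((eps i j l : ℂ)) • ⁅X j, X l⁆ := by
    intro i
    ext r c
    have hbr : ∀ j l : Fin 3, Tendsto (fun s : ℝ => (s:ℂ)^2 * (⁅T j s, T l s⁆ r c))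
        (nhdsWithin 0 (Ioo 0 δ)) (nhds (⁅X j, X l⁆ r c)) := by
      intro j l
      have h1 : Tendsto (fun s : ℝ =>
          (∑ m, ((s:ℂ) * T j s r m) * ((s:ℂ) * T l s m c)) -
          ∑ m, ((s:ℂ) * T l s r m) * ((s:ℂ) * T j s m c))
          (nhdsWithin 0 (Ioo 0 δ))
          (nhds ((∑ m, X j r m * X l m c) - ∑ m, X l r m * X j m c)) := by
        apply Tendsto.sub
        · apply tendsto_finset_sum
          intro m _
          simpa using (hlim j r m).mul (hlim l m c)
        · apply tendsto_finset_sum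
          intro m _
          simpa using (hlim l r m).mul (hlim j m c)
      have heq : (fun s : ℝ => (s:ℂ)^2 * (⁅T j s, T l s⁆ r c)) =
          fun s : ℝ =>
          (∑ m, ((s:ℂ) * T j s r m) * ((s:ℂ) * T l s m c)) -
          ∑ m, ((s:ℂ) * T l s r m) * ((s:ℂ) * T j s m c) := by
        funext s
        simp only [Ring.lie_def, Matrix.sub_apply, Matrix.mul_apply, mul_sub,
          Finset.mul_sum]
        congr 1 <;> exact Finset.sum_congr rfl fun m _ => by ring
      have heq2 : ⁅X j, X l⁆ r c = (∑ m, X j r m * X l m c) - ∑ m, X l r m * X j m c := by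
        simp [Ring.lie_def, Matrix.sub_apply, Matrix.mul_apply]
      rw [heq, heq2]
      exact h1
    have hXlim : Tendsto (fun s : ℝ => (s:ℂ)^2 * deriv (fun t => T i t r c) s)
        (nhdsWithin 0 (Ioo 0 δ))
        (nhds (((2⁻¹:ℂ) • ∑ j, ∑ l, (eps i j l:ℂ) • ⁅X j, X l⁆) r c)) := by
      have h2 : Tendsto (fun s : ℝ => (2⁻¹:ℂ) * ∑ j, ∑ l, (eps i j l:ℂ) *
          ((s:ℂ)^2 * (⁅T j s, T l s⁆ r c)))
          (nhdsWithin 0 (Ioo 0 δ))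
          (nhds ((2⁻¹:ℂ) * ∑ j, ∑ l, (eps i j l:ℂ) * (⁅X j, X l⁆ r c))) := by
        apply Tendsto.const_mul
        apply tendsto_finset_sum; intro j _
        apply tendsto_finset_sum; intro l _
        exact (hbr j l).const_mul _
      have heq3 : ((2⁻¹:ℂ) • ∑ j, ∑ l, (eps i j l:ℂ) • ⁅X j, X l⁆) r c =
          (2⁻¹:ℂ) * ∑ j, ∑ l, (eps i j l:ℂ) * (⁅X j, X l⁆ r c) := by
        simp [Matrix.smul_apply, Matrix.sum_apply, smul_eq_mul]
      rw [heq3]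
      apply h2.congr'
      filter_upwards [self_mem_nhdsWithin] with s hs
      rw [hnahm i s hs r c]
      simp only [Matrix.smul_apply, Matrix.sum_apply, smul_eq_mul, Finset.mul_sum]
      exact Finset.sum_congr rfl fun j _ => Finset.sum_congr rfl fun l _ => by ring
    exact tendsto_nhds_unique (hlim' i r c) hXlim
  have h0 : X 0 = ⁅X 1, X 2⁆ := by
    rw [key 0]
    simp only [Fin.sum_univ_three, epsC_000, epsC_001, epsC_002, epsC_010, epsC_011,
      epsC_012, epsC_020, epsC_021, epsC_022, zero_smul, one_smul, neg_smul,
      add_zero, zero_add]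
    rw [← (@lie_skew _ LieRing.ofAssociativeRing (X 1) (X 2))]
    module
  have h1 : X 1 = ⁅X 2, X 0⁆ := by
    rw [key 1]
    simp only [Fin.sum_univ_three, epsC_100, epsC_101, epsC_102, epsC_110, epsC_111,
      epsC_112, epsC_120, epsC_121, epsC_122, zero_smul, one_smul, neg_smul,
      add_zero, zero_add]
    rw [← (@lie_skew _ LieRing.ofAssociativeRing (X 2) (X 0))]
    module
  have h2 : X 2 = ⁅X 0, X 1⁆ := by
    rw [key 2]
    simp only [Fin.sum_univ_three, epsC_200, epsC_201, epsC_202, epsC_210, epsC_211,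
      epsC_212, epsC_220, epsC_221, epsC_222, zero_smul, one_smul, neg_smul,
      add_zero, zero_add]
    rw [← (@lie_skew _ LieRing.ofAssociativeRing (X 0) (X 1))]
    module
  intro i j
  have main : ∀ a b : Fin 3, ⁅X a, X b⁆ = ∑ l : Fin 3, ((eps a b l : ℤ):ℂ) • X l := by
    intro a b
    fin_cases a <;> fin_cases b
    · show ⁅X 0, X 0⁆ = ∑ l : Fin 3, ((eps 0 0 l : ℤ):ℂ) • X l
      simp [Fin.sum_univ_three]
      exact sub_self _
    · show ⁅X 0, X 1⁆ = ∑ l : Fin 3, ((eps 0 1 l : ℤ):ℂ) • X l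
      simp [Fin.sum_univ_three]
      exact h2.symm
    · show ⁅X 0, X 2⁆ = ∑ l : Fin 3, ((eps 0 2 l : ℤ):ℂ) • X l
      simp [Fin.sum_univ_three]
      rw [h1, ← (@lie_skew _ LieRing.ofAssociativeRing (X 0) (X 2))]
    · show ⁅X 1, X 0⁆ = ∑ l : Fin 3, ((eps 1 0 l : ℤ):ℂ) • X l
      simp [Fin.sum_univ_three]
      rw [h2, ← (@lie_skew _ LieRing.ofAssociativeRing (X 1) (X 0))]
    · show ⁅X 1, X 1⁆ = ∑ l : Fin 3, ((eps 1 1 l : ℤ):ℂ) • X l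
      simp [Fin.sum_univ_three]
      exact sub_self _
    · show ⁅X 1, X 2⁆ = ∑ l : Fin 3, ((eps 1 2 l : ℤ):ℂ) • X l
      simp [Fin.sum_univ_three]
      exact h0.symm
    · show ⁅X 2, X 0⁆ = ∑ l : Fin 3, ((eps 2 0 l : ℤ):ℂ) • X l
      simp [Fin.sum_univ_three]
      exact h1.symm
    · show ⁅X 2, X 1⁆ = ∑ l : Fin 3, ((eps 2 1 l : ℤ):ℂ) • X l
      simp [Fin.sum_univ_three]
      rw [h0, ← (@lie_skew _ LieRing.ofAssociativeRing (X 2) (X 1))]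
    · show ⁅X 2, X 2⁆ = ∑ l : Fin 3, ((eps 2 2 l : ℤ):ℂ) • X l
      simp [Fin.sum_univ_three]
      exact sub_self _
  exact main i j
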